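/- If u and v are convex functions on a bounded convex domain U ⊆ ℝᵐ, continuous up to the boundary, with v ≤ u in U and v = u on ∂U, then the subgradient image satisfies ∂u(U) ⊆ ∂v(U). -/

import Mathlib

open Set Metric Filter Topology

namespace Stmt5

/-- The subgradient set of `w` at `x`, relative to the set `S`. -/
def subgradientSet {m : ℕ} (S : Set (EuclideanSpace ℝ (Fin m)))
    (w : EuclideanSpace ℝ (Fin m) → ℝ) (x : EuclideanSpace ℝ (Fin m)) :
    Set (EuclideanSpace ℝ (Fin m)) :=
  {p | ∀ y ∈ S, w x + (inner ℝ p (y - x) : ℝ) ≤ w y}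

/-- The gradient image `∂w(A)`. -/
def gradientImage {m : ℕ} (S : Set (EuclideanSpace ℝ (Fin m)))
    (w : EuclideanSpace ℝ (Fin m) → ℝ) (A : Set (EuclideanSpace ℝ (Fin m))) :
    Set (EuclideanSpace ℝ (Fin m)) :=
  ⋃ x ∈ A, subgradientSet S w x

/-- if `u, v` are convex on a bounded convex domain `U`, continuous up
to the boundary, `v ≤ u` in `U` and `v = u` on `∂U`, then `∂u(U) ⊆ ∂v(U)`. -/
theorem gradientImage_mono_of_le (m : ℕ)
    (U : Set (EuclideanSpace ℝ (Fin m))) (hUopen : IsOpen U)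
    (hUbd : Bornology.IsBounded U) (hUconv : Convex ℝ U)
    (u v : EuclideanSpace ℝ (Fin m) → ℝ)
    (huc : ContinuousOn u (closure U)) (hvc : ContinuousOn v (closure U))
    (huconv : ConvexOn ℝ U u) (hvconv : ConvexOn ℝ U v)
    (hle : ∀ x ∈ U, v x ≤ u x) (hbdry : ∀ x ∈ frontier U, v x = u x) :
    gradientImage U u U ⊆ gradientImage U v U := by
  intro p hp
  simp only [gradientImage, mem_iUnion, subgradientSet, mem_setOf_eq] at hp ⊢
  obtain ⟨x₀, hx₀U, hsub⟩ := hp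
  -- extend the subgradient inequality for u to the closure of U
  have hsub' : ∀ z ∈ closure U, u x₀ + (inner ℝ p (z - x₀) : ℝ) ≤ u z := by
    intro z hz
    have hne : (𝓝[U] z).NeBot := mem_closure_iff_nhdsWithin_neBot.mp hz
    have hcont : ContinuousWithinAt (fun x => u x - (u x₀ + (inner ℝ p (x - x₀) : ℝ))) U z := by
      apply ContinuousWithinAt.sub
      · exact (huc z hz).mono subset_closure
      · exact (continuous_const.add ((continuous_const.inner
          (continuous_id.sub continuous_const)))).continuousWithinAt
    have hge : 0 ≤ u z - (u x₀ + (inner ℝ p (z - x₀) : ℝ)) := by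
      refine ge_of_tendsto hcont ?_
      filter_upwards [self_mem_nhdsWithin] with y hy
      linarith [hsub y hy]
    linarith
  -- minimize v - ⟨p, ·⟩ on closure U
  have hcpt : IsCompact (closure U) :=
    Metric.isCompact_of_isClosed_isBounded isClosed_closure hUbd.closure
  have hfc : ContinuousOn (fun x => v x - (inner ℝ p x : ℝ)) (closure U) :=
    hvc.sub ((continuous_const.inner continuous_id).continuousOn)
  obtain ⟨z, hzcl, hzmin⟩ := hcpt.exists_isMinOn ⟨x₀, subset_closure hx₀U⟩ hfc
  have key : ∀ y ∈ U, v y - (inner ℝ p y : ℝ) ≥ v z - (inner ℝ p z : ℝ) := fun y hy =>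
    hzmin (subset_closure hy)
  by_cases hzU : z ∈ U
  · refine ⟨z, hzU, fun y hy => ?_⟩
    have := key y hy
    have hinner : (inner ℝ p (y - z) : ℝ) = (inner ℝ p y : ℝ) - (inner ℝ p z : ℝ) :=
      inner_sub_right p y z
    linarith
  · -- z is on the frontier; then x₀ is also a minimizer
    have hzf : z ∈ frontier U := by
      rw [frontier_eq_closure_inter_closure, hUopen.isClosed_compl.closure_eq]
      exact ⟨hzcl, hzU⟩
    have h1 : v z = u z := hbdry z hzf
    have h2 : u x₀ + (inner ℝ p (z - x₀) : ℝ) ≤ u z := hsub' z hzcl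
    have h3 : v x₀ ≤ u x₀ := hle x₀ hx₀U
    have hinner0 : (inner ℝ p (z - x₀) : ℝ) = (inner ℝ p z : ℝ) - (inner ℝ p x₀ : ℝ) :=
      inner_sub_right p z x₀
    have hx0min : v x₀ - (inner ℝ p x₀ : ℝ) ≤ v z - (inner ℝ p z : ℝ) := by linarith
    refine ⟨x₀, hx₀U, fun y hy => ?_⟩
    have := key y hy
    have hinner : (inner ℝ p (y - x₀) : ℝ) = (inner ℝ p y : ℝ) - (inner ℝ p x₀ : ℝ) :=
      inner_sub_right p y x₀
    linarith
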